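/- arXiv:1609.05617 — 2 statements merged into one kernel-verified Lean document; each statement's English description precedes it below -/
import Mathlib

section
/- For every compact set K ⊂ ℝ there exists r > 0 such that for all t ∈ [-2π/3, 2π/3] and all h ∈ K, the modulus of the characteristic function φ_h(t) = cos(t) + i·tanh(h)·sin(t) satisfies |φ_h(t)| ≤ exp(-r t² L''(h)), where L(h) = log cosh h and L''(h) = 1 - tanh²(h). -/
open Real

private lemma sin_sq_ge_aux {t : ℝ} (h0 : 0 ≤ t) (h1 : t ≤ 2 * π / 3) :
    t ^ 2 / 6 ≤ Real.sin t ^ 2 := by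
  have hpi := Real.pi_gt_three
  have hpi' := Real.pi_lt_d2
  rcases le_or_gt t (π / 2) with hc | hc
  · have hj : 2 / π * t ≤ Real.sin t := Real.mul_le_sin h0 hc
    have hnn : 0 ≤ 2 / π * t := by positivity
    have hsq : (2 / π * t) ^ 2 ≤ Real.sin t ^ 2 := by
      exact pow_le_pow_left₀ hnn hj 2
    have : t ^ 2 / 6 ≤ (2 / π * t) ^ 2 := by
      have hps : π ^ 2 ≤ 24 := by nlinarith
      have hπ2 : (0:ℝ) < π ^ 2 := by positivity
      rw [mul_pow, div_pow, div_mul_eq_mul_div, div_le_div_iff₀ (by norm_num) hπ2]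
      nlinarith [sq_nonneg t]
    linarith
  · -- π/2 < t ≤ 2π/3 : sin t = sin (π - t), with π - t ∈ [π/3, π/2)
    have h3 : Real.sin (π / 3) ≤ Real.sin (π - t) := by
      apply Real.sin_le_sin_of_le_of_le_pi_div_two
      · linarith
      · linarith
      · linarith
    rw [Real.sin_pi_sub] at h3
    have hval : Real.sin (π / 3) = Real.sqrt 3 / 2 := Real.sin_pi_div_three
    have h32 : Real.sin (π / 3) ^ 2 = 3 / 4 := by
      rw [hval]; rw [div_pow, Real.sq_sqrt (by norm_num : (3:ℝ) ≥ 0)]; norm_num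
    have hs0 : 0 ≤ Real.sin (π / 3) := by rw [hval]; positivity
    have hsq : (3:ℝ) / 4 ≤ Real.sin t ^ 2 := by
      calc (3:ℝ)/4 = Real.sin (π / 3) ^ 2 := h32.symm
        _ ≤ Real.sin t ^ 2 := pow_le_pow_left₀ hs0 h3 2
    have ht2 : t ^ 2 ≤ 4 * π ^ 2 / 9 := by nlinarith
    nlinarith

private lemma sin_sq_ge {t : ℝ} (h1 : -(2 * π / 3) ≤ t) (h2 : t ≤ 2 * π / 3) :
    t ^ 2 / 6 ≤ Real.sin t ^ 2 := by
  rcases le_or_gt 0 t with h | h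
  · exact sin_sq_ge_aux h h2
  · have := sin_sq_ge_aux (t := -t) (by linarith) (by linarith)
    simpa [Real.sin_neg, neg_pow] using this

/-- On every compact set K of asymmetry parameters h, the characteristic function
φ_h(t) = cos t + i tanh(h) sin t of a ±1 Bernoulli with mean tanh h satisfies the
Gaussian-type bound |φ_h(t)| ≤ exp(-r t² L''(h)) on [-2π/3, 2π/3], where
L''(h) = 1 - tanh² h. -/
theorem charFun_gaussian_bound (K : Set ℝ) (hK : IsCompact K) :
    ∃ r > (0 : ℝ), ∀ t ∈ Set.Icc (-(2 * Real.pi / 3)) (2 * Real.pi / 3), ∀ h ∈ K,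
      ‖(Real.cos t : ℂ) + Complex.I * (Real.tanh h : ℂ) * (Real.sin t : ℂ)‖
        ≤ Real.exp (-r * t ^ 2 * (1 - Real.tanh h ^ 2)) := by
  refine ⟨1/12, by norm_num, ?_⟩
  rintro t ⟨ht1, ht2⟩ h -
  set s : ℝ := 1 - Real.tanh h ^ 2 with hs
  have hs0 : 0 ≤ s := by
    have hc : 0 < Real.cosh h := Real.cosh_pos h
    have hid : Real.cosh h ^ 2 - Real.sinh h ^ 2 = 1 := Real.cosh_sq_sub_sinh_sq h
    rw [hs, Real.tanh_eq_sinh_div_cosh, div_pow]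
    have : Real.sinh h ^ 2 / Real.cosh h ^ 2 ≤ 1 := by
      rw [div_le_one (by positivity)]; nlinarith
    linarith
  -- rewrite the abs
  have habs : ‖(Real.cos t : ℂ) + Complex.I * (Real.tanh h : ℂ) * (Real.sin t : ℂ)‖
      = Real.sqrt (Real.cos t ^ 2 + (Real.tanh h * Real.sin t) ^ 2) := by
    rw [show ((Real.cos t : ℂ) + Complex.I * (Real.tanh h : ℂ) * (Real.sin t : ℂ))
        = ((Real.cos t : ℝ) : ℂ) + ((Real.tanh h * Real.sin t : ℝ) : ℂ) * Complex.I by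
      push_cast; ring]
    rw [Complex.norm_add_mul_I]
  rw [habs]
  have hid : Real.cos t ^ 2 + (Real.tanh h * Real.sin t) ^ 2 = 1 - s * Real.sin t ^ 2 := by
    have := Real.sin_sq_add_cos_sq t
    rw [hs]; nlinarith
  rw [hid]
  have hkey : 1 - s * Real.sin t ^ 2 ≤ Real.exp (2 * (-(1/12) * t ^ 2 * s)) := by
    have h1 : 1 - s * Real.sin t ^ 2 ≤ Real.exp (-(s * Real.sin t ^ 2)) := by
      have := Real.add_one_le_exp (-(s * Real.sin t ^ 2))
      linarith
    have h2 : -(s * Real.sin t ^ 2) ≤ 2 * (-(1/12) * t ^ 2 * s) := by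
      have := sin_sq_ge ht1 ht2
      nlinarith
    exact h1.trans (Real.exp_le_exp.mpr h2)
  calc Real.sqrt (1 - s * Real.sin t ^ 2)
      ≤ Real.sqrt (Real.exp (2 * (-(1/12) * t ^ 2 * s))) := Real.sqrt_le_sqrt hkey
    _ = Real.exp (-(1/12) * t ^ 2 * s) := by
        rw [show 2 * (-(1/12) * t ^ 2 * s) = (-(1/12) * t ^ 2 * s) + (-(1/12) * t ^ 2 * s) by ring,
          Real.exp_add, Real.sqrt_mul_self (Real.exp_pos _).le]
    _ ≤ Real.exp (-(1/12) * t ^ 2 * s) := le_refl _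
end

section
/- For the partition function Z_N = Σ_{S ∈ C_N} (p_N/(1−p_N))^{A(S)/2}, where C_N is the set of lattice bridges of length 2N and A(S) the area under S, one has the identity log(Z_N / 2^{2N}) = Σ_{i=1}^{2N} L(h_i^N) + log ν_N(S(2N)=0), where h_i^N = (2σ/(2N)^α)(N − i + 1/2), L(h) = log cosh h, and ν_N is the product measure of ±1 Bernoulli variables X_i with E[X_i] = tanh(h_i^N). -/
open Finset

/-- Identity for the partition function of the weakly asymmetric bridge:
log (Z_N / 2^{2N}) = Σ_i L(h_i^N) + log ν_N(S(2N) = 0), where bridges are encoded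
by their ±1 steps (themselves encoded by booleans), λ = p_N/(1-p_N) = exp(4σ/(2N)^α),
L = log cosh, and ν_N is the product of ±1 Bernoulli laws with means tanh(h_i^N). -/
theorem partition_function_identity (N : ℕ) (hN : 1 ≤ N) (σ α : ℝ) (hσ : 0 < σ)
    (hα : 0 < α) :
    let lam : ℝ := Real.exp (4 * σ / (2 * N : ℝ) ^ α)
    let h : ℕ → ℝ := fun i => (2 * σ / (2 * N : ℝ) ^ α) * ((N : ℝ) - i + 1 / 2)
    let step : Bool → ℤ := fun b => if b then 1 else -1
    let S : (Fin (2 * N) → Bool) → ℕ → ℤ := fun X k =>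
      ∑ i ∈ Finset.univ.filter (fun i : Fin (2 * N) => (i : ℕ) < k), step (X i)
    let A : (Fin (2 * N) → Bool) → ℤ := fun X => ∑ k ∈ Finset.range (2 * N), S X (k + 1)
    let Z : ℝ := ∑ X ∈ Finset.univ.filter (fun X : Fin (2 * N) → Bool => S X (2 * N) = 0),
      lam ^ ((A X : ℝ) / 2)
    let ν : ℝ := ∑ X ∈ Finset.univ.filter (fun X : Fin (2 * N) → Bool => S X (2 * N) = 0),
      ∏ i : Fin (2 * N), (1 + Real.tanh (h ((i : ℕ) + 1)) * (step (X i) : ℝ)) / 2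
    Real.log (Z / 2 ^ (2 * N))
      = (∑ i ∈ Finset.range (2 * N), Real.log (Real.cosh (h (i + 1)))) + Real.log ν := by
  intro lam h step S A Z ν
  have hlam : lam = Real.exp (4 * σ / (2 * N : ℝ) ^ α) := rfl
  have hh : ∀ n : ℕ, h n = (2 * σ / (2 * N : ℝ) ^ α) * ((N : ℝ) - n + 1 / 2) := fun _ => rfl
  -- step values
  have hstept : (step true : ℝ) = 1 := by norm_num [step]
  have hstepf : (step false : ℝ) = -1 := by norm_num [step]
  -- the per-site factor identity
  have factor : ∀ (t : ℝ) (b : Bool),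
      Real.exp (t * (step b : ℝ)) / 2
        = Real.cosh t * ((1 + Real.tanh t * (step b : ℝ)) / 2) := by
    intro t b
    have hc := (Real.cosh_pos t).ne'
    have ht : Real.cosh t * Real.tanh t = Real.sinh t := by
      rw [Real.tanh_eq_sinh_div_cosh]; field_simp
    cases b
    · rw [hstepf, mul_neg_one, mul_neg_one]
      linear_combination (ht - Real.cosh_sub_sinh t) / 2
    · rw [hstept, mul_one, mul_one]
      linear_combination (- Real.cosh_add_sinh t - ht) / 2
  -- positivity of factors
  have hfpos : ∀ (t : ℝ) (b : Bool), 0 < (1 + Real.tanh t * (step b : ℝ)) / 2 := by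
    intro t b
    have hc := Real.cosh_pos t
    have h1 := Real.exp_pos t
    have h2 := Real.exp_pos (-t)
    have e1 := Real.cosh_add_sinh t
    have e2 := Real.cosh_sub_sinh t
    have hlt : Real.sinh t / Real.cosh t < 1 := (div_lt_one hc).2 (by nlinarith)
    have hgt : -1 < Real.sinh t / Real.cosh t := by rw [lt_div_iff₀ hc]; nlinarith
    rw [Real.tanh_eq_sinh_div_cosh]
    cases b
    · rw [hstepf]; nlinarith
    · rw [hstept]; nlinarith
  -- the area as a linear function of the steps
  have hA : ∀ X : Fin (2 * N) → Bool,
      (A X : ℝ) = ∑ i : Fin (2 * N), ((2 * N : ℝ) - (i : ℕ)) * (step (X i) : ℝ) := by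
    intro X
    have hAZ : A X = ∑ i : Fin (2 * N), ((2 * N - (i : ℕ) : ℕ) : ℤ) * step (X i) := by
      show (∑ k ∈ Finset.range (2 * N), S X (k + 1)) = _
      have hSk : ∀ k, S X (k + 1) = ∑ i : Fin (2 * N),
          if (i : ℕ) < k + 1 then step (X i) else 0 := fun k => Finset.sum_filter _ _
      rw [Finset.sum_congr rfl fun k _ => hSk k, Finset.sum_comm]
      refine Finset.sum_congr rfl fun i _ => ?_
      rw [← Finset.sum_filter]
      have hf : Finset.filter (fun k => (i : ℕ) < k + 1) (Finset.range (2 * N))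
          = Finset.Ico (i : ℕ) (2 * N) := by
        ext k; simp only [Finset.mem_filter, Finset.mem_range, Finset.mem_Ico]; omega
      rw [hf, Finset.sum_const, Nat.card_Ico, nsmul_eq_mul]
    rw [hAZ]
    push_cast
    refine Finset.sum_congr rfl fun i _ => ?_
    congr 1
    rw [Nat.cast_sub i.isLt.le]
    push_cast
    ring
  -- the bridge constraint
  have hsum0 : ∀ X : Fin (2 * N) → Bool, S X (2 * N) = 0 →
      (∑ i : Fin (2 * N), (step (X i) : ℝ)) = 0 := by
    intro X hX
    have h1 : (∑ i : Fin (2 * N), step (X i)) = 0 := by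
      have hS : S X (2 * N) = ∑ i : Fin (2 * N), step (X i) := by
        show (∑ i ∈ Finset.univ.filter (fun i : Fin (2 * N) => (i : ℕ) < 2 * N), step (X i)) = _
        rw [Finset.filter_true_of_mem fun i _ => i.isLt]
      rwa [hS] at hX
    have := congrArg (Int.cast : ℤ → ℝ) h1
    push_cast at this
    exact this
  -- the key per-configuration identity
  have key : ∀ X : Fin (2 * N) → Bool, S X (2 * N) = 0 →
      lam ^ ((A X : ℝ) / 2) / 2 ^ (2 * N)
        = (∏ i ∈ Finset.range (2 * N), Real.cosh (h (i + 1))) *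
          ∏ i : Fin (2 * N), (1 + Real.tanh (h ((i : ℕ) + 1)) * (step (X i) : ℝ)) / 2 := by
    intro X hX
    have h0 := hsum0 X hX
    have e1 : lam ^ ((A X : ℝ) / 2)
        = Real.exp (∑ i : Fin (2 * N), h ((i : ℕ) + 1) * (step (X i) : ℝ)) := by
      rw [hlam, ← Real.exp_mul]
      congr 1
      rw [hA X]
      have expand : (∑ i : Fin (2 * N), h ((i : ℕ) + 1) * (step (X i) : ℝ))
          = (2 * σ / (2 * N : ℝ) ^ α)
              * (∑ i : Fin (2 * N), ((2 * N : ℝ) - (i : ℕ)) * (step (X i) : ℝ))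
            - ((2 * σ / (2 * N : ℝ) ^ α) * ((N : ℝ) + 1 / 2))
              * (∑ i : Fin (2 * N), (step (X i) : ℝ)) := by
        rw [Finset.mul_sum, Finset.mul_sum, ← Finset.sum_sub_distrib]
        refine Finset.sum_congr rfl fun i _ => ?_
        rw [hh ((i : ℕ) + 1)]
        push_cast
        ring
      rw [expand, h0, mul_zero, sub_zero]
      ring
    calc lam ^ ((A X : ℝ) / 2) / 2 ^ (2 * N)
        = ∏ i : Fin (2 * N), (Real.exp (h ((i : ℕ) + 1) * (step (X i) : ℝ)) / 2) := by
          rw [e1, Real.exp_sum, Finset.prod_div_distrib, Finset.prod_const,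
            Finset.card_univ, Fintype.card_fin]
      _ = ∏ i : Fin (2 * N), (Real.cosh (h ((i : ℕ) + 1)) *
            ((1 + Real.tanh (h ((i : ℕ) + 1)) * (step (X i) : ℝ)) / 2)) :=
          Finset.prod_congr rfl fun i _ => factor _ _
      _ = (∏ i : Fin (2 * N), Real.cosh (h ((i : ℕ) + 1))) *
            ∏ i : Fin (2 * N), (1 + Real.tanh (h ((i : ℕ) + 1)) * (step (X i) : ℝ)) / 2 :=
          Finset.prod_mul_distrib
      _ = (∏ i ∈ Finset.range (2 * N), Real.cosh (h (i + 1))) *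
            ∏ i : Fin (2 * N), (1 + Real.tanh (h ((i : ℕ) + 1)) * (step (X i) : ℝ)) / 2 := by
          rw [Fin.prod_univ_eq_prod_range (fun i => Real.cosh (h (i + 1))) (2 * N)]
  have hZdef : Z = ∑ X ∈ Finset.univ.filter (fun X : Fin (2 * N) → Bool => S X (2 * N) = 0),
      lam ^ ((A X : ℝ) / 2) := rfl
  have hνdef : ν = ∑ X ∈ Finset.univ.filter (fun X : Fin (2 * N) → Bool => S X (2 * N) = 0),
      ∏ i : Fin (2 * N), (1 + Real.tanh (h ((i : ℕ) + 1)) * (step (X i) : ℝ)) / 2 := rfl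
  have hZ : Z / 2 ^ (2 * N)
      = (∏ i ∈ Finset.range (2 * N), Real.cosh (h (i + 1))) * ν := by
    rw [hZdef, hνdef, Finset.sum_div, Finset.mul_sum]
    refine Finset.sum_congr rfl fun X hX => ?_
    exact key X (Finset.mem_filter.1 hX).2
  have hprodpos : 0 < ∏ i ∈ Finset.range (2 * N), Real.cosh (h (i + 1)) :=
    Finset.prod_pos fun i _ => Real.cosh_pos _
  have hν : 0 < ν := by
    rw [hνdef]
    apply Finset.sum_pos
    · intro X _
      exact Finset.prod_pos fun i _ => hfpos _ _
    · refine ⟨fun i => decide ((i : ℕ) < N), ?_⟩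
      simp only [Finset.mem_filter, Finset.mem_univ, true_and]
      show (∑ i ∈ Finset.univ.filter (fun i : Fin (2 * N) => (i : ℕ) < 2 * N),
        step (decide ((i : ℕ) < N))) = 0
      rw [Finset.filter_true_of_mem fun i _ => i.isLt]
      have hval : ∀ i : Fin (2 * N),
          step (decide ((i : ℕ) < N)) = if (i : ℕ) < N then (1 : ℤ) else -1 := by
        intro i; by_cases hi : (i : ℕ) < N <;> simp [step, hi]
      rw [Finset.sum_congr rfl fun i _ => hval i,
        Fin.sum_univ_eq_sum_range (fun i => if i < N then (1 : ℤ) else -1) (2 * N),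
        Finset.range_eq_Ico,
        ← Finset.sum_Ico_consecutive _ (Nat.zero_le N) (by omega : N ≤ 2 * N)]
      have e1 : (∑ i ∈ Finset.Ico 0 N, if i < N then (1 : ℤ) else -1) = N := by
        rw [Finset.sum_congr rfl fun i hi => if_pos (Finset.mem_Ico.1 hi).2,
          Finset.sum_const, Nat.card_Ico, Nat.sub_zero, nsmul_eq_mul, mul_one]
      have e2 : (∑ i ∈ Finset.Ico N (2 * N), if i < N then (1 : ℤ) else -1) = -(N : ℤ) := by
        rw [Finset.sum_congr rfl
            fun i hi => if_neg (by have := (Finset.mem_Ico.1 hi).1; omega),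
          Finset.sum_const, Nat.card_Ico, nsmul_eq_mul]
        have h2N : 2 * N - N = N := by omega
        rw [h2N]; ring
      rw [e1, e2]; ring
  rw [hZ, Real.log_mul hprodpos.ne' hν.ne',
    Real.log_prod fun i _ => (Real.cosh_pos _).ne']
end
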